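/- Let n ≥ 1 and let L, U : Matrix (Fin n) (Fin n) ℝ be symmetric matrices with L i j ≤ U i j for all i, j. For a sign vector z : Fin n → ℝ with z i ∈ {-1, 1} for all i, define the vertex matrix L^z by (L^z) i j = L i j if i = j or z i * z j = 1, and (L^z) i j = U i j otherwise. Then for every symmetric matrix H : Matrix (Fin n) (Fin n) ℝ with L i j ≤ H i j ≤ U i j for all i, j, every eigenvalue λ of H satisfies λ ≥ min over all sign vectors z of λ_min(L^z), where λ_min denotes the smallest eigenvalue of a real symmetric matrix. -/

import Mathlib

/-- The set of (real) eigenvalues of a real matrix. -/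
def realSpec {n : ℕ} (A : Matrix (Fin n) (Fin n) ℝ) : Set ℝ :=
  {μ | ∃ v : Fin n → ℝ, v ≠ 0 ∧ A.mulVec v = μ • v}

/-- The smallest eigenvalue of a (symmetric) real matrix. -/
noncomputable def lamMin {n : ℕ} (A : Matrix (Fin n) (Fin n) ℝ) : ℝ := sInf (realSpec A)

/-- The Hertz–Rohn vertex matrix `L^z` for a sign vector `z`. -/
noncomputable def vertexL {n : ℕ} (L U : Matrix (Fin n) (Fin n) ℝ) (z : Fin n → ℝ) :
    Matrix (Fin n) (Fin n) ℝ :=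
  Matrix.of fun i j => if i = j ∨ z i * z j = 1 then L i j else U i j

open Matrix

lemma hr_isSymm_isHermitian {n : ℕ} {A : Matrix (Fin n) (Fin n) ℝ} (h : A.IsSymm) :
    A.IsHermitian := by
  ext i j
  simpa using h.apply i j

/-- Rayleigh lower bound: the minimum eigenvalue times `‖v‖²` is at most `vᵀ A v`. -/
lemma hr_rayleigh_lower {n : ℕ} (hn : 0 < n) {A : Matrix (Fin n) (Fin n) ℝ}
    (hA : A.IsHermitian) (v : Fin n → ℝ) :
    (Finset.univ.inf' ⟨⟨0, hn⟩, Finset.mem_univ _⟩ hA.eigenvalues) * (v ⬝ᵥ v)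
      ≤ v ⬝ᵥ (A *ᵥ v) := by
  set μ := Finset.univ.inf' ⟨⟨0, hn⟩, Finset.mem_univ _⟩ hA.eigenvalues with hμ
  set Um : Matrix (Fin n) (Fin n) ℝ := (hA.eigenvectorUnitary : Matrix (Fin n) (Fin n) ℝ)
  have hstar : star Um = Umᵀ := by
    ext i j; simp [Matrix.star_apply]
  have hUU : Um * Umᵀ = 1 := by
    rw [← hstar]; exact (Matrix.mem_unitaryGroup_iff).mp hA.eigenvectorUnitary.2
  set w : Fin n → ℝ := Umᵀ *ᵥ v with hw
  have hww : w ⬝ᵥ w = v ⬝ᵥ v := by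
    have key : ∀ x : Fin n → ℝ, w ⬝ᵥ x = v ⬝ᵥ (Um *ᵥ x) := fun x => by
      rw [hw, Matrix.mulVec_transpose, ← Matrix.dotProduct_mulVec]
    rw [key w, hw, Matrix.mulVec_mulVec, hUU, Matrix.one_mulVec]
  have hAv : v ⬝ᵥ (A *ᵥ v) = w ⬝ᵥ (Matrix.diagonal hA.eigenvalues *ᵥ w) := by
    conv_lhs => rw [hA.spectral_theorem]
    have : (RCLike.ofReal ∘ hA.eigenvalues : Fin n → ℝ) = hA.eigenvalues := by
      ext i; simp
    rw [Unitary.conjStarAlgAut_apply, hstar, this]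
    rw [← Matrix.mulVec_mulVec, ← Matrix.mulVec_mulVec, Matrix.dotProduct_mulVec (A := Um),
      ← Matrix.mulVec_transpose]
  rw [hAv, ← hww]
  have : w ⬝ᵥ (Matrix.diagonal hA.eigenvalues *ᵥ w) = ∑ i, hA.eigenvalues i * (w i * w i) := by
    simp only [dotProduct, Matrix.mulVec_diagonal]
    exact Finset.sum_congr rfl fun i _ => by ring
  rw [this, dotProduct, Finset.mul_sum]
  apply Finset.sum_le_sum
  intro i _
  have h1 : μ ≤ hA.eigenvalues i := Finset.inf'_le _ (Finset.mem_univ i)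
  have h2 : 0 ≤ w i * w i := mul_self_nonneg _
  nlinarith

/-- The minimum of the eigenvalue list is a lower bound on the real spectrum. -/
lemma hr_realSpec_lb {n : ℕ} (hn : 0 < n) {A : Matrix (Fin n) (Fin n) ℝ}
    (hA : A.IsHermitian) {μ : ℝ} (hμ : μ ∈ realSpec A) :
    (Finset.univ.inf' ⟨⟨0, hn⟩, Finset.mem_univ _⟩ hA.eigenvalues) ≤ μ := by
  obtain ⟨v, hv, hAv⟩ := hμ
  have hvv : 0 < v ⬝ᵥ v := by
    rcases lt_or_eq_of_le (Finset.sum_nonneg (fun i _ => mul_self_nonneg (v i))) with h | h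
    · exact h
    · exact absurd (dotProduct_self_eq_zero.mp h.symm) hv
  have h1 := hr_rayleigh_lower hn hA v
  rw [hAv] at h1
  have h2 : v ⬝ᵥ (μ • v) = μ * (v ⬝ᵥ v) := by
    simp [dotProduct_smul, smul_eq_mul]
  rw [h2] at h1
  exact le_of_mul_le_mul_right h1 hvv

/-- The minimum of the eigenvalue list belongs to the real spectrum. -/
lemma hr_min_eig_mem {n : ℕ} (hn : 0 < n) {A : Matrix (Fin n) (Fin n) ℝ}
    (hA : A.IsHermitian) :
    (Finset.univ.inf' ⟨⟨0, hn⟩, Finset.mem_univ _⟩ hA.eigenvalues) ∈ realSpec A := by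
  obtain ⟨i, -, hi⟩ := Finset.exists_mem_eq_inf' (⟨⟨0, hn⟩, Finset.mem_univ _⟩ :
    Finset.univ.Nonempty) hA.eigenvalues
  rw [hi]
  refine ⟨⇑(hA.eigenvectorBasis i), ?_, hA.mulVec_eigenvectorBasis i⟩
  intro h
  apply hA.eigenvectorBasis.orthonormal.ne_zero i
  ext x
  exact congrFun h x

lemma hr_lamMin_le {n : ℕ} (hn : 0 < n) {A : Matrix (Fin n) (Fin n) ℝ}
    (hA : A.IsHermitian) {c : ℝ}
    (hc : (Finset.univ.inf' ⟨⟨0, hn⟩, Finset.mem_univ _⟩ hA.eigenvalues) ≤ c) :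
    lamMin A ≤ c :=
  le_trans (csInf_le ⟨_, fun _ hx => hr_realSpec_lb hn hA hx⟩ (hr_min_eig_mem hn hA)) hc

/-- Hertz and Rohn's method: validity of the lower eigenvalue bound. -/
theorem hertz_rohn_lower_valid
    (n : ℕ) (hn : 0 < n)
    (L U : Matrix (Fin n) (Fin n) ℝ)
    (hLsymm : L.IsSymm) (hUsymm : U.IsSymm)
    (hLU : ∀ i j, L i j ≤ U i j)
    (H : Matrix (Fin n) (Fin n) ℝ) (hHsymm : H.IsSymm)
    (hHL : ∀ i j, L i j ≤ H i j) (hHU : ∀ i j, H i j ≤ U i j)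
    (lam : ℝ) (hlam : lam ∈ realSpec H) :
    sInf {m : ℝ | ∃ z : Fin n → ℝ, (∀ i, z i = -1 ∨ z i = 1) ∧
      m = lamMin (vertexL L U z)} ≤ lam := by
  obtain ⟨v, hv, hHv⟩ := hlam
  -- the sign vector of v
  set z : Fin n → ℝ := fun i => if v i < 0 then -1 else 1 with hzdef
  have hz : ∀ i, z i = -1 ∨ z i = 1 := by
    intro i; by_cases h : v i < 0 <;> simp [hzdef, h]
  have hzv : ∀ i, 0 ≤ z i * v i := by
    intro i; by_cases h : v i < 0
    · simp only [hzdef, if_pos h]; nlinarith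
    · simp only [hzdef, if_neg h]; push_neg at h; nlinarith
  set A : Matrix (Fin n) (Fin n) ℝ := vertexL L U z with hAdef
  have hAapp : ∀ i j, A i j = if i = j ∨ z i * z j = 1 then L i j else U i j := by
    intro i j; rfl
  have hAsymm : A.IsHermitian := by
    apply hr_isSymm_isHermitian
    ext i j
    rw [Matrix.transpose_apply, hAapp, hAapp]
    have hc : (j = i ∨ z j * z i = 1) ↔ (i = j ∨ z i * z j = 1) := by
      rw [eq_comm, mul_comm]
    by_cases h : i = j ∨ z i * z j = 1
    · rw [if_pos (hc.mpr h), if_pos h, hLsymm.apply i j]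
    · rw [if_neg (fun hh => h (hc.mp hh)), if_neg h, hUsymm.apply i j]
  -- pointwise comparison of quadratic form terms
  have key : ∀ i j, A i j * (v i * v j) ≤ H i j * (v i * v j) := by
    intro i j
    by_cases h : i = j ∨ z i * z j = 1
    · have hvv : 0 ≤ v i * v j := by
        rcases h with h | h
        · subst h; exact mul_self_nonneg _
        · nlinarith [mul_nonneg (hzv i) (hzv j)]
      rw [hAapp, if_pos h]
      exact mul_le_mul_of_nonneg_right (hHL i j) hvv
    · push_neg at h
      obtain ⟨h1, h2⟩ := h
      have hzz : z i * z j = -1 := by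
        rcases hz i with hi | hi <;> rcases hz j with hj | hj <;>
          rw [hi, hj] at h2 ⊢ <;> norm_num at *
      have hvv : v i * v j ≤ 0 := by
        nlinarith [mul_nonneg (hzv i) (hzv j)]
      rw [hAapp, if_neg (fun hh => h2 (hh.resolve_left h1))]
      exact mul_le_mul_of_nonpos_right (hHU i j) hvv
  -- quadratic form comparison
  have hquad : v ⬝ᵥ (A *ᵥ v) ≤ v ⬝ᵥ (H *ᵥ v) := by
    simp only [dotProduct, Matrix.mulVec, Finset.mul_sum]
    apply Finset.sum_le_sum
    intro i _
    apply Finset.sum_le_sum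
    intro j _
    calc v i * (A i j * v j) = A i j * (v i * v j) := by ring
      _ ≤ H i j * (v i * v j) := key i j
      _ = v i * (H i j * v j) := by ring
  have hvv : 0 < v ⬝ᵥ v := by
    rcases lt_or_eq_of_le (Finset.sum_nonneg (fun i _ => mul_self_nonneg (v i))) with h | h
    · exact h
    · exact absurd (dotProduct_self_eq_zero.mp h.symm) hv
  have hHvv : v ⬝ᵥ (H *ᵥ v) = lam * (v ⬝ᵥ v) := by
    rw [hHv]; simp [dotProduct_smul, smul_eq_mul]
  -- minimum eigenvalue of A is at most lam
  have hmin : (Finset.univ.inf' ⟨⟨0, hn⟩, Finset.mem_univ _⟩ hAsymm.eigenvalues) ≤ lam := by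
    have h1 := hr_rayleigh_lower hn hAsymm v
    rw [hHvv] at hquad
    have := le_trans h1 hquad
    exact le_of_mul_le_mul_right this hvv
  have hlamA : lamMin A ≤ lam := hr_lamMin_le hn hAsymm hmin
  -- the candidate set is finite, hence bounded below
  set S : Set ℝ := {m : ℝ | ∃ z : Fin n → ℝ, (∀ i, z i = -1 ∨ z i = 1) ∧
      m = lamMin (vertexL L U z)} with hSdef
  have hPfin : {z : Fin n → ℝ | ∀ i, z i = -1 ∨ z i = 1}.Finite := by
    have hsub : {z : Fin n → ℝ | ∀ i, z i = -1 ∨ z i = 1} ⊆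
        Set.pi Set.univ (fun _ : Fin n => ({-1, 1} : Set ℝ)) := by
      intro z hz'
      rw [Set.mem_pi]
      intro i _
      rcases hz' i with h | h <;> simp [h]
    exact (Set.Finite.pi (fun _ => Set.toFinite ({-1, 1} : Set ℝ))).subset hsub
  have hSfin : S.Finite := by
    apply Set.Finite.subset (hPfin.image (fun z => lamMin (vertexL L U z)))
    rintro m ⟨z', hz', hm⟩
    exact ⟨z', hz', hm.symm⟩
  have hmem : lamMin A ∈ S := ⟨z, hz, rfl⟩
  exact le_trans (csInf_le hSfin.bddBelow hmem) hlamA
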